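/- Let X be a Banach lattice of measurable functions on a measure space (Ω,Σ,μ). If the support Ω_f = {ω ∈ Ω : f(ω) ≠ 0} of every element f ∈ X is σ-finite (i.e., a countable union of sets of finite measure), then X is a complete lattice. -/

import Mathlib

open MeasureTheory

/-- A Banach lattice of (a.e.-equivalence classes of) real-valued measurable
functions on a measure space `(Ω, μ)`: a linear subspace of `Ω →ₘ[μ] ℝ` with a complete
norm satisfying the lattice (ideal) property. -/
structure BanachFunctionLattice (Ω : Type*) [MeasurableSpace Ω] (μ : MeasureTheory.Measure Ω) where
  carrier : Set (Ω →ₘ[μ] ℝ)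
  norm : (Ω →ₘ[μ] ℝ) → ℝ
  zero_mem : 0 ∈ carrier
  add_mem : ∀ {f g}, f ∈ carrier → g ∈ carrier → f + g ∈ carrier
  smul_mem : ∀ (c : ℝ) {f}, f ∈ carrier → c • f ∈ carrier
  norm_nonneg : ∀ f ∈ carrier, 0 ≤ norm f
  norm_eq_zero_iff : ∀ f ∈ carrier, (norm f = 0 ↔ f = 0)
  norm_add_le : ∀ f ∈ carrier, ∀ g ∈ carrier, norm (f + g) ≤ norm f + norm g
  norm_smul : ∀ (c : ℝ), ∀ f ∈ carrier, norm (c • f) = |c| * norm f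
  ideal_mem : ∀ f ∈ carrier, ∀ g : (Ω →ₘ[μ] ℝ), |g| ≤ |f| → g ∈ carrier
  ideal_norm_le : ∀ f ∈ carrier, ∀ g : (Ω →ₘ[μ] ℝ), |g| ≤ |f| → norm g ≤ norm f
  complete : ∀ u : ℕ → (Ω →ₘ[μ] ℝ), (∀ n, u n ∈ carrier) →
    (∀ ε > 0, ∃ N, ∀ m ≥ N, ∀ n ≥ N, norm (u m - u n) < ε) →
    ∃ f ∈ carrier, ∀ ε > 0, ∃ N, ∀ n ≥ N, norm (u n - f) < ε

variable {Ω : Type*} [MeasurableSpace Ω] {μ : MeasureTheory.Measure Ω}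

/-- The a.e.-equivalence class of `ω ↦ |f ω| ^ p` (real power). -/
noncomputable def absRpow (p : ℝ) (f : Ω →ₘ[μ] ℝ) : Ω →ₘ[μ] ℝ :=
  AEEqFun.mk (fun ω => |f ω| ^ p)
    (((by measurability : Measurable fun x : ℝ => |x| ^ p).comp_aemeasurable
      f.aemeasurable).aestronglyMeasurable)

/-- A (not necessarily complete) normed function space: the data of a carrier and a norm.
Used to speak about `p`-convexifications without re-proving all the axioms. -/
structure FunctionSpace (Ω : Type*) [MeasurableSpace Ω] (μ : MeasureTheory.Measure Ω) where
  carrier : Set (Ω →ₘ[μ] ℝ)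
  norm : (Ω →ₘ[μ] ℝ) → ℝ

/-- The carrier-and-norm data underlying a Banach function lattice. -/
def BanachFunctionLattice.toFunctionSpace (X : BanachFunctionLattice Ω μ) :
    FunctionSpace Ω μ := ⟨X.carrier, X.norm⟩

/-- The `p`-convexification `X^(p)`: all `f` with `|f|^p ∈ X`, with norm `‖|f|^p‖_X^(1/p)`. -/
noncomputable def pConv (X : BanachFunctionLattice Ω μ) (p : ℝ) : FunctionSpace Ω μ where
  carrier := {f | absRpow p f ∈ X.carrier}
  norm := fun f => (X.norm (absRpow p f)) ^ (1 / p)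

/-- The sum space `X₀ + X₁` (as a set). -/
def sumSet (A₀ A₁ : FunctionSpace Ω μ) : Set (Ω →ₘ[μ] ℝ) :=
  {f | ∃ a₀ ∈ A₀.carrier, ∃ a₁ ∈ A₁.carrier, f = a₀ + a₁}

/-- The Peetre `K`-functional `K(t, f; A₀, A₁)`. -/
noncomputable def Kfun (A₀ A₁ : FunctionSpace Ω μ) (t : ℝ) (f : Ω →ₘ[μ] ℝ) : ℝ :=
  sInf {r | ∃ a₀ ∈ A₀.carrier, ∃ a₁ ∈ A₁.carrier,
    f = a₀ + a₁ ∧ r = A₀.norm a₀ + t * A₁.norm a₁}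

/-- The norm of the sum space `X₀ + X₁`, namely `K(1, ·)`. -/
noncomputable def sumNorm (A₀ A₁ : FunctionSpace Ω μ) (f : Ω →ₘ[μ] ℝ) : ℝ :=
  Kfun A₀ A₁ 1 f

/-- The functional `D(t, f; A₀, A₁)`, the analogue of the `K`-functional restricted to
disjointly supported decompositions. -/
noncomputable def Dfun (A₀ A₁ : FunctionSpace Ω μ) (t : ℝ) (f : Ω →ₘ[μ] ℝ) : ℝ :=
  sInf {r | ∃ a₀ ∈ A₀.carrier, ∃ a₁ ∈ A₁.carrier,
    f = a₀ + a₁ ∧ a₀ * a₁ = 0 ∧ r = A₀.norm a₀ + t * A₁.norm a₁}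

/-- `T : (A₀, A₁) → (A₀, A₁)` is a bounded linear operator: `T` is linear on `A₀ + A₁`
and its restriction to each `Aⱼ` is a bounded operator from `Aⱼ` into itself. -/
def IsBoundedCoupleOperator (A₀ A₁ : FunctionSpace Ω μ) (T : (Ω →ₘ[μ] ℝ) → (Ω →ₘ[μ] ℝ)) :
    Prop :=
  (∀ f ∈ sumSet A₀ A₁, ∀ g ∈ sumSet A₀ A₁, T (f + g) = T f + T g) ∧
  (∀ (c : ℝ), ∀ f ∈ sumSet A₀ A₁, T (c • f) = c • T f) ∧
  (∀ f ∈ A₀.carrier, T f ∈ A₀.carrier) ∧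
  (∀ f ∈ A₁.carrier, T f ∈ A₁.carrier) ∧
  (∃ C₀ : ℝ, ∀ f ∈ A₀.carrier, A₀.norm (T f) ≤ C₀ * A₀.norm f) ∧
  (∃ C₁ : ℝ, ∀ f ∈ A₁.carrier, A₁.norm (T f) ≤ C₁ * A₁.norm f)

/-- `‖T‖_{Aⱼ → Aⱼ} ≤ C` for `j = 0, 1`. -/
def CoupleOperatorNormLE (A₀ A₁ : FunctionSpace Ω μ) (T : (Ω →ₘ[μ] ℝ) → (Ω →ₘ[μ] ℝ))
    (C : ℝ) : Prop :=
  (∀ f ∈ A₀.carrier, A₀.norm (T f) ≤ C * A₀.norm f) ∧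
  (∀ f ∈ A₁.carrier, A₁.norm (T f) ≤ C * A₁.norm f)

/-- `T` is a positive operator on `A₀ + A₁`. -/
def IsPositiveOn (A₀ A₁ : FunctionSpace Ω μ) (T : (Ω →ₘ[μ] ℝ) → (Ω →ₘ[μ] ℝ)) : Prop :=
  ∀ h ∈ sumSet A₀ A₁, 0 ≤ h → 0 ≤ T h

/-- `(A₀, A₁)` is a Calderón couple. -/
def IsCalderonCouple (A₀ A₁ : FunctionSpace Ω μ) : Prop :=
  ∀ f ∈ sumSet A₀ A₁, ∀ g ∈ sumSet A₀ A₁,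
    (∀ t > 0, Kfun A₀ A₁ t g ≤ Kfun A₀ A₁ t f) →
    ∃ T, IsBoundedCoupleOperator A₀ A₁ T ∧ T f = g

/-- `(A₀, A₁)` is a `C`-Calderón couple. -/
def IsCCalderonCouple (A₀ A₁ : FunctionSpace Ω μ) (C : ℝ) : Prop :=
  ∀ f ∈ sumSet A₀ A₁, ∀ g ∈ sumSet A₀ A₁,
    (∀ t > 0, Kfun A₀ A₁ t g ≤ Kfun A₀ A₁ t f) →
    ∃ T, IsBoundedCoupleOperator A₀ A₁ T ∧ T f = g ∧ CoupleOperatorNormLE A₀ A₁ T C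

/-- `(A₀, A₁)` is a positive Calderón couple. -/
def IsPositiveCalderonCouple (A₀ A₁ : FunctionSpace Ω μ) : Prop :=
  ∀ f ∈ sumSet A₀ A₁, ∀ g ∈ sumSet A₀ A₁, 0 ≤ f → 0 ≤ g →
    (∀ t > 0, Kfun A₀ A₁ t g ≤ Kfun A₀ A₁ t f) →
    ∃ T, IsBoundedCoupleOperator A₀ A₁ T ∧ IsPositiveOn A₀ A₁ T ∧ T f = g

/-- `(A₀, A₁)` is a positive `C`-Calderón couple. -/
def IsPositiveCCalderonCouple (A₀ A₁ : FunctionSpace Ω μ) (C : ℝ) : Prop :=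
  ∀ f ∈ sumSet A₀ A₁, ∀ g ∈ sumSet A₀ A₁, 0 ≤ f → 0 ≤ g →
    (∀ t > 0, Kfun A₀ A₁ t g ≤ Kfun A₀ A₁ t f) →
    ∃ T, IsBoundedCoupleOperator A₀ A₁ T ∧ IsPositiveOn A₀ A₁ T ∧ T f = g ∧
      CoupleOperatorNormLE A₀ A₁ T C

/-- A set `S` of (classes of) measurable functions has the Least Upper Bound Property:
every nonempty subset of `S` bounded above by an element of `S` has a least upper bound
in `S` (for the a.e. pointwise order). -/
def HasLUBP (S : Set (Ω →ₘ[μ] ℝ)) : Prop :=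
  ∀ A ⊆ S, A.Nonempty → (∃ b ∈ S, ∀ a ∈ A, a ≤ b) →
    ∃ y ∈ S, (∀ a ∈ A, a ≤ y) ∧ ∀ z ∈ S, (∀ a ∈ A, a ≤ z) → y ≤ z


section AuxLUBP

open Filter Real
open scoped ENNReal

variable {Ω : Type*} [MeasurableSpace Ω] {μ : MeasureTheory.Measure Ω}

private lemma aux_sandwich_mem (X : BanachFunctionLattice Ω μ) {g f : Ω →ₘ[μ] ℝ}
    (hg : g ∈ X.carrier) (h1 : ∀ᵐ ω ∂μ, |f ω| ≤ |g ω|) : f ∈ X.carrier := by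
  refine X.ideal_mem g hg f (AEEqFun.coeFn_le.1 ?_)
  filter_upwards [AEEqFun.coeFn_abs f, AEEqFun.coeFn_abs g, h1] with ω h2 h3 h4
  rw [h2, h3]; exact h4

private lemma aux_abs_mem (X : BanachFunctionLattice Ω μ) {f : Ω →ₘ[μ] ℝ}
    (hf : f ∈ X.carrier) : |f| ∈ X.carrier := by
  refine aux_sandwich_mem X hf ?_
  filter_upwards [AEEqFun.coeFn_abs f] with ω h2
  rw [h2]; exact (abs_abs _).le

private lemma aux_sup_mem (X : BanachFunctionLattice Ω μ) {f g : Ω →ₘ[μ] ℝ}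
    (hf : f ∈ X.carrier) (hg : g ∈ X.carrier) : f ⊔ g ∈ X.carrier := by
  refine aux_sandwich_mem X (X.add_mem (aux_abs_mem X hf) (aux_abs_mem X hg)) ?_
  filter_upwards [AEEqFun.coeFn_sup f g, AEEqFun.coeFn_add |f| |g|,
    AEEqFun.coeFn_abs f, AEEqFun.coeFn_abs g] with ω h1 h2 h3 h4
  rw [h1, h2, Pi.add_apply, h3, h4]
  have : |f ω ⊔ g ω| ≤ |f ω| + |g ω| := by
    refine (abs_max_le_max_abs_abs).trans ?_
    exact max_le (le_add_of_nonneg_right (abs_nonneg _)) (le_add_of_nonneg_left (abs_nonneg _))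
  exact this.trans (le_abs_self _)

private lemma aux_sub_mem (X : BanachFunctionLattice Ω μ) {f g : Ω →ₘ[μ] ℝ}
    (hf : f ∈ X.carrier) (hg : g ∈ X.carrier) : f - g ∈ X.carrier := by
  have : f - g = f + (-1 : ℝ) • g := by rw [neg_one_smul, sub_eq_add_neg]
  rw [this]; exact X.add_mem hf (X.smul_mem (-1) hg)

private lemma aux_sub_le_sub {p q c : Ω →ₘ[μ] ℝ} (h : p ≤ q) : p - c ≤ q - c := by
  refine AEEqFun.coeFn_le.1 ?_
  filter_upwards [AEEqFun.coeFn_le.2 h, AEEqFun.coeFn_sub p c, AEEqFun.coeFn_sub q c]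
    with ω h1 h2 h3
  rw [h2, h3]; exact sub_le_sub_right h1 _

private lemma aux_add_le_add {p q c : Ω →ₘ[μ] ℝ} (h : p ≤ q) : p + c ≤ q + c := by
  refine AEEqFun.coeFn_le.1 ?_
  filter_upwards [AEEqFun.coeFn_le.2 h, AEEqFun.coeFn_add p c, AEEqFun.coeFn_add q c]
    with ω h1 h2 h3
  rw [h2, h3]; exact add_le_add_left h1 _

private lemma aux_sup_sub {p q c : Ω →ₘ[μ] ℝ} : (p - c) ⊔ (q - c) = (p ⊔ q) - c := by
  refine AEEqFun.ext ?_
  filter_upwards [AEEqFun.coeFn_sup (p - c) (q - c), AEEqFun.coeFn_sub p c,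
    AEEqFun.coeFn_sub q c, AEEqFun.coeFn_sub (p ⊔ q) c, AEEqFun.coeFn_sup p q]
    with ω h1 h2 h3 h4 h5
  rw [h1, h2, h3, h4, Pi.sub_apply, Pi.sub_apply, Pi.sub_apply, h5]
  exact max_sub_sub_right _ _ _

/-- The analytic core: a sup-closed family of a.e.-classes squeezed between `0` and `h`,
where `h` is supported (a.e.) in a countable union of measurable sets of finite measure,
has a least upper bound in `Ω →ₘ[μ] ℝ`. -/
private lemma aux_core {h : Ω →ₘ[μ] ℝ}
    (t : ℕ → Set Ω) (htm : ∀ n, MeasurableSet (t n)) (htf : ∀ n, μ (t n) < ⊤)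
    (hsupp : ∀ᵐ ω ∂μ, h ω ≠ 0 → ω ∈ ⋃ n, t n)
    (B : Set (Ω →ₘ[μ] ℝ)) (hBne : B.Nonempty) (hBsup : SupClosed B)
    (hB0 : ∀ f ∈ B, 0 ≤ f) (hBh : ∀ f ∈ B, f ≤ h) :
    ∃ y : Ω →ₘ[μ] ℝ, (∀ f ∈ B, f ≤ y) ∧ (∀ z : Ω →ₘ[μ] ℝ, (∀ f ∈ B, f ≤ z) → y ≤ z) ∧
      0 ≤ y ∧ y ≤ h := by
  classical
  -- the coefficients and the finite measure ν
  set c : ℕ → ℝ≥0∞ := fun n => (2 : ℝ≥0∞)⁻¹ ^ n * (1 + μ (t n))⁻¹ with hc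
  have hc_ne_zero : ∀ n, c n ≠ 0 := by
    intro n
    refine mul_ne_zero (pow_ne_zero _ (by simp)) (ENNReal.inv_ne_zero.2 ?_)
    exact ENNReal.add_ne_top.2 ⟨ENNReal.one_ne_top, (htf n).ne⟩
  set ν : Measure Ω := Measure.sum (fun n => c n • μ.restrict (t n)) with hν
  have hν_apply : ∀ E : Set Ω, MeasurableSet E → ν E = ∑' n, c n * μ (E ∩ t n) := by
    intro E hE
    rw [hν, Measure.sum_apply _ hE]
    refine tsum_congr fun n => ?_
    rw [Measure.smul_apply, Measure.restrict_apply hE, smul_eq_mul]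
  have hνfin : IsFiniteMeasure ν := by
    constructor
    rw [hν_apply _ MeasurableSet.univ]
    have hle : ∀ n : ℕ, c n * μ (Set.univ ∩ t n) ≤ (2 : ℝ≥0∞)⁻¹ ^ n := by
      intro n
      rw [Set.univ_inter, hc, mul_assoc]
      refine le_trans (mul_le_mul_right ?_ _) (by rw [mul_one])
      calc (1 + μ (t n))⁻¹ * μ (t n) ≤ (1 + μ (t n))⁻¹ * (1 + μ (t n)) :=
            mul_le_mul_right le_add_self _
        _ = 1 := ENNReal.inv_mul_cancel (by simp) (ENNReal.add_ne_top.2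
            ⟨ENNReal.one_ne_top, (htf n).ne⟩)
        _ ≤ 1 := le_rfl
    refine lt_of_le_of_lt (ENNReal.tsum_le_tsum hle) ?_
    rw [ENNReal.tsum_geometric]
    exact ENNReal.inv_lt_top.2 (tsub_pos_iff_lt.2 (ENNReal.inv_lt_one.2 ENNReal.one_lt_two))
  haveI := hνfin
  have hνμ : ν ≪ μ := by
    refine Measure.AbsolutelyContinuous.mk fun E hE hE0 => ?_
    rw [hν_apply E hE]
    have : ∀ n, μ (E ∩ t n) = 0 := fun n =>
      measure_mono_null Set.inter_subset_left hE0
    simp [this]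
  -- from ν-null to μ-null for sets inside ⋃ t n
  have h_to_mu : ∀ E : Set Ω, MeasurableSet E → ν E = 0 →
      (∀ᵐ ω ∂μ, ω ∈ E → ω ∈ ⋃ n, t n) → μ E = 0 := by
    intro E hE hνE hae
    have h1 : ∀ n, μ (E ∩ t n) = 0 := by
      intro n
      rw [hν_apply E hE] at hνE
      have := (ENNReal.tsum_eq_zero.1 hνE) n
      rcases mul_eq_zero.1 this with hc0 | hm0
      · exact absurd hc0 (hc_ne_zero n)
      · exact hm0
    have h2 : μ (E ∩ ⋃ n, t n) = 0 := by
      rw [Set.inter_iUnion]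
      exact le_antisymm (le_trans (measure_iUnion_le _) (by simp [h1])) zero_le
    have h3 : μ (E \ ⋃ n, t n) = 0 := by
      have : ∀ᵐ ω ∂μ, ω ∉ E \ ⋃ n, t n := by
        filter_upwards [hae] with ω hω
        intro hmem
        exact hmem.2 (hω hmem.1)
      have h4 := ae_iff.1 this
      exact measure_mono_null (fun ω hω => not_not_intro hω) h4
    refine le_antisymm ?_ zero_le
    calc μ E = μ ((E ∩ ⋃ n, t n) ∪ (E \ ⋃ n, t n)) := by rw [Set.inter_union_diff]
      _ ≤ μ (E ∩ ⋃ n, t n) + μ (E \ ⋃ n, t n) := measure_union_le _ _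
      _ = 0 := by rw [h2, h3, add_zero]
  -- the functional Φ
  set Φ : (Ω →ₘ[μ] ℝ) → ℝ := fun f => ∫ ω, Real.arctan (f ω) ∂ν with hΦ
  have harctan_bdd : ∀ x : ℝ, ‖Real.arctan x‖ ≤ π / 2 := by
    intro x
    rw [Real.norm_eq_abs]
    exact abs_le.2 ⟨(Real.neg_pi_div_two_lt_arctan x).le, (Real.arctan_lt_pi_div_two x).le⟩
  have hint : ∀ f : Ω →ₘ[μ] ℝ, MeasureTheory.Integrable (fun ω => Real.arctan (f ω)) ν := by
    intro f
    refine ⟨Real.continuous_arctan.comp_aestronglyMeasurable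
      (f.aestronglyMeasurable.mono_ac hνμ), ?_⟩
    exact MeasureTheory.HasFiniteIntegral.of_bounded (C := π / 2)
      (Filter.Eventually.of_forall fun ω => harctan_bdd _)
  have hΦmono : ∀ f g : Ω →ₘ[μ] ℝ, f ≤ g → Φ f ≤ Φ g := by
    intro f g hfg
    refine MeasureTheory.integral_mono_ae (hint f) (hint g) ?_
    filter_upwards [hνμ.ae_le (AEEqFun.coeFn_le.2 hfg)] with ω hω
    exact Real.arctan_strictMono.monotone hω
  have hΦbdd : BddAbove (Φ '' B) := by
    refine ⟨(π / 2) * (ν Set.univ).toReal, ?_⟩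
    rintro r ⟨f, _, rfl⟩
    calc Φ f ≤ ∫ _, π / 2 ∂ν := by
          refine MeasureTheory.integral_mono_ae (hint f)
            (MeasureTheory.integrable_const _) ?_
          exact Filter.Eventually.of_forall fun ω =>
            (Real.arctan_lt_pi_div_two _).le
      _ = (ν Set.univ).toReal • (π / 2) := MeasureTheory.integral_const _
      _ = (π / 2) * (ν Set.univ).toReal := by rw [smul_eq_mul, mul_comm]
  set m : ℝ := sSup (Φ '' B) with hm
  have hΦB_ne : (Φ '' B).Nonempty := hBne.image Φ
  have hΦ_le_m : ∀ f ∈ B, Φ f ≤ m := fun f hf => le_csSup hΦbdd ⟨f, hf, rfl⟩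
  -- maximizing sequence
  have hex : ∀ n : ℕ, ∃ f, f ∈ B ∧ m - 1 / (n + 1) < Φ f := by
    intro n
    have hlt : m - 1 / (n + 1) < m := by
      have : (0 : ℝ) < 1 / (n + 1) := by positivity
      linarith
    obtain ⟨r, ⟨f, hf, rfl⟩, hr⟩ := exists_lt_of_lt_csSup hΦB_ne hlt
    exact ⟨f, hf, hr⟩
  choose fseq hfseqB hfseqΦ using hex
  set g : ℕ → (Ω →ₘ[μ] ℝ) := fun n =>
    (Finset.range (n + 1)).sup' Finset.nonempty_range_add_one fseq with hg
  have hgB : ∀ n, g n ∈ B := fun n =>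
    hBsup.finsetSup'_mem _ fun i _ => hfseqB i
  have hgmono : Monotone g := by
    intro i j hij
    exact Finset.sup'_mono fseq (Finset.range_subset_range.2 (by omega)) _
  have hfseq_le_g : ∀ n, fseq n ≤ g n := fun n =>
    Finset.le_sup' fseq (Finset.self_mem_range_succ n)
  -- measurable representatives and the candidate supremum Y
  have hGm : ∀ n, AEMeasurable (g n : Ω → ℝ) μ := fun n => (g n).aemeasurable
  set G : ℕ → Ω → ℝ := fun n => (hGm n).mk _ with hG
  have hGmeas : ∀ n, Measurable (G n) := fun n => (hGm n).measurable_mk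
  have hGeq : ∀ n, (g n : Ω → ℝ) =ᵐ[μ] G n := fun n => (hGm n).ae_eq_mk
  set Y : Ω → ℝ := fun ω => ⨆ n, G n ω with hY
  have hYmeas : Measurable Y := Measurable.iSup hGmeas
  set y : Ω →ₘ[μ] ℝ := AEEqFun.mk Y hYmeas.aestronglyMeasurable with hy
  have hYcoe : (y : Ω → ℝ) =ᵐ[μ] Y := AEEqFun.coeFn_mk _ _
  -- the a.e. good set
  have hbasic : ∀ᵐ ω ∂μ, (∀ n, G n ω = g n ω) ∧ (∀ n, g n ω ≤ h ω) ∧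
      (∀ n, 0 ≤ g n ω) ∧ (∀ n i, n ≤ i → g n ω ≤ g i ω) := by
    have e1 : ∀ᵐ ω ∂μ, ∀ n, G n ω = g n ω :=
      MeasureTheory.ae_all_iff.2 fun n => (hGeq n).symm
    have e2 : ∀ᵐ ω ∂μ, ∀ n, g n ω ≤ h ω :=
      MeasureTheory.ae_all_iff.2 fun n => AEEqFun.coeFn_le.2 (hBh _ (hgB n))
    have e3 : ∀ᵐ ω ∂μ, ∀ n, 0 ≤ g n ω := by
      refine MeasureTheory.ae_all_iff.2 fun n => ?_
      filter_upwards [AEEqFun.coeFn_le.2 (hB0 _ (hgB n)), AEEqFun.coeFn_zero (μ := μ) (β := ℝ)]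
        with ω h1 h2
      simpa [h2] using h1
    have e4 : ∀ᵐ ω ∂μ, ∀ n i : ℕ, n ≤ i → g n ω ≤ g i ω := by
      refine MeasureTheory.ae_all_iff.2 fun n => MeasureTheory.ae_all_iff.2 fun i => ?_
      by_cases hni : n ≤ i
      · filter_upwards [AEEqFun.coeFn_le.2 (hgmono hni)] with ω h1 using fun _ => h1
      · filter_upwards with ω h1 using absurd h1 hni
    filter_upwards [e1, e2, e3, e4] with ω h1 h2 h3 h4 using ⟨h1, h2, h3, h4⟩
  -- pointwise consequences on the good set
  have hgood : ∀ᵐ ω ∂μ, (∀ n, G n ω = g n ω) ∧ (∀ n, g n ω ≤ h ω) ∧ (∀ n, 0 ≤ g n ω) ∧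
      Filter.Tendsto (fun n => G n ω) Filter.atTop (nhds (Y ω)) ∧
      (∀ n, g n ω ≤ Y ω) ∧ 0 ≤ Y ω ∧ Y ω ≤ h ω := by
    filter_upwards [hbasic] with ω hω
    obtain ⟨h1, h2, h3, h4⟩ := hω
    have hbdd : BddAbove (Set.range fun n => G n ω) := by
      refine ⟨h ω, ?_⟩
      rintro x ⟨n, rfl⟩
      simp only [h1 n]; exact h2 n
    have hmono : Monotone fun n => G n ω := by
      intro i j hij
      simp only [h1 i, h1 j]; exact h4 i j hij
    have htend : Filter.Tendsto (fun n => G n ω) Filter.atTop (nhds (Y ω)) :=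
      tendsto_atTop_ciSup hmono hbdd
    have hle : ∀ n, g n ω ≤ Y ω := by
      intro n
      rw [← h1 n]; exact le_ciSup hbdd n
    have hY0 : 0 ≤ Y ω := le_trans (h3 0) (hle 0)
    have hYh : Y ω ≤ h ω := by
      refine ciSup_le fun n => ?_
      simp only [h1 n]; exact h2 n
    exact ⟨h1, h2, h3, htend, hle, hY0, hYh⟩
  -- convergence of Φ (g n) to ∫ arctan Y
  have harctanY_int : MeasureTheory.Integrable (fun ω => Real.arctan (Y ω)) ν := by
    refine ⟨(Real.continuous_arctan.measurable.comp hYmeas).aestronglyMeasurable, ?_⟩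
    exact MeasureTheory.HasFiniteIntegral.of_bounded (C := π / 2)
      (Filter.Eventually.of_forall fun ω => harctan_bdd _)
  have hΦg_tend : Filter.Tendsto (fun n => Φ (g n)) Filter.atTop
      (nhds (∫ ω, Real.arctan (Y ω) ∂ν)) := by
    refine MeasureTheory.tendsto_integral_of_dominated_convergence (fun _ => π / 2)
      (fun n => (hint (g n)).1) (MeasureTheory.integrable_const _)
      (fun n => Filter.Eventually.of_forall fun ω => harctan_bdd _) ?_
    filter_upwards [hνμ.ae_le hgood] with ω hω
    obtain ⟨h1, _, _, h4, _, _, _⟩ := hω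
    have : Filter.Tendsto (fun n => Real.arctan (G n ω)) Filter.atTop
        (nhds (Real.arctan (Y ω))) :=
      (Real.continuous_arctan.continuousAt.tendsto).comp h4
    refine this.congr fun n => ?_
    rw [h1 n]
  have hIY_eq_m : (∫ ω, Real.arctan (Y ω) ∂ν) = m := by
    have hub : ∀ n, Φ (g n) ≤ m := fun n => hΦ_le_m _ (hgB n)
    have hlb : ∀ n : ℕ, m - 1 / (n + 1) ≤ Φ (g n) :=
      fun n => (hfseqΦ n).le.trans (hΦmono _ _ (hfseq_le_g n))
    have h1 : (∫ ω, Real.arctan (Y ω) ∂ν) ≤ m :=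
      le_of_tendsto hΦg_tend (Filter.Eventually.of_forall hub)
    have h2 : m ≤ ∫ ω, Real.arctan (Y ω) ∂ν := by
      have htend2 : Filter.Tendsto (fun n : ℕ => m - 1 / (n + 1)) Filter.atTop (nhds m) := by
        have := tendsto_one_div_add_atTop_nhds_zero_nat (𝕜 := ℝ)
        have h3 := Filter.Tendsto.sub (tendsto_const_nhds (x := m)) this
        simpa using h3
      exact le_of_tendsto_of_tendsto' htend2 hΦg_tend hlb
    linarith
  -- every f ∈ B satisfies f ≤ Y, ν-a.e.
  have hkey : ∀ f ∈ B, ∀ᵐ ω ∂ν, f ω ≤ Y ω := by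
    intro f hf
    set W : Ω → ℝ := fun ω => max (f ω) (Y ω) with hW
    have hWam : AEMeasurable W ν := (f.aemeasurable.mono' hνμ).max (hYmeas.aemeasurable.mono' hνμ)
    have hWint : MeasureTheory.Integrable (fun ω => Real.arctan (W ω)) ν := by
      refine ⟨(Real.continuous_arctan.measurable.comp_aemeasurable hWam).aestronglyMeasurable, ?_⟩
      exact MeasureTheory.HasFiniteIntegral.of_bounded (C := π / 2)
        (Filter.Eventually.of_forall fun ω => harctan_bdd _)
    -- Φ (f ⊔ g n) → ∫ arctan W
    have htendW : Filter.Tendsto (fun n => Φ (f ⊔ g n)) Filter.atTop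
        (nhds (∫ ω, Real.arctan (W ω) ∂ν)) := by
      refine MeasureTheory.tendsto_integral_of_dominated_convergence (fun _ => π / 2)
        (fun n => (hint (f ⊔ g n)).1) (MeasureTheory.integrable_const _)
        (fun n => Filter.Eventually.of_forall fun ω => harctan_bdd _) ?_
      have hsup_ae : ∀ᵐ ω ∂μ, ∀ n, (f ⊔ g n) ω = max (f ω) (g n ω) :=
        MeasureTheory.ae_all_iff.2 fun n => AEEqFun.coeFn_sup f (g n)
      filter_upwards [hνμ.ae_le hgood, hνμ.ae_le hsup_ae] with ω hω hsup
      obtain ⟨h1, _, _, h4, _, _, _⟩ := hω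
      have htd : Filter.Tendsto (fun n => Real.arctan (max (f ω) (G n ω))) Filter.atTop
          (nhds (Real.arctan (W ω))) := by
        refine (Real.continuous_arctan.continuousAt.tendsto).comp ?_
        exact Filter.Tendsto.max tendsto_const_nhds h4
      refine htd.congr fun n => ?_
      rw [hsup n, h1 n]
    have hWle : (∫ ω, Real.arctan (W ω) ∂ν) ≤ ∫ ω, Real.arctan (Y ω) ∂ν := by
      rw [hIY_eq_m]
      exact le_of_tendsto htendW (Filter.Eventually.of_forall fun n =>
        hΦ_le_m _ (hBsup hf (hgB n)))
    have hdiff0 : (fun ω => Real.arctan (W ω) - Real.arctan (Y ω)) =ᵐ[ν] 0 := by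
      have hnn : 0 ≤ᵐ[ν] fun ω => Real.arctan (W ω) - Real.arctan (Y ω) :=
        Filter.Eventually.of_forall fun ω =>
          sub_nonneg.2 (Real.arctan_strictMono.monotone (le_max_right _ _))
      have hintd := hWint.sub harctanY_int
      have hzero : (∫ ω, (Real.arctan (W ω) - Real.arctan (Y ω)) ∂ν) = 0 := by
        rw [MeasureTheory.integral_sub hWint harctanY_int]
        have h5 := MeasureTheory.integral_nonneg_of_ae hnn
        rw [MeasureTheory.integral_sub hWint harctanY_int] at h5
        linarith
      exact (MeasureTheory.integral_eq_zero_iff_of_nonneg_ae hnn hintd).1 hzero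
    filter_upwards [hdiff0] with ω hω
    have : Real.arctan (W ω) = Real.arctan (Y ω) := by
      have := sub_eq_zero.1 hω
      simpa using this
    have hWY : W ω = Y ω := Real.arctan_injective this
    exact sup_eq_right.1 hWY
  -- upgrade to f ≤ y (μ-a.e.) using the support condition
  have hub : ∀ f ∈ B, f ≤ y := by
    intro f hf
    set F : Ω → ℝ := f.aemeasurable.mk _ with hF
    have hFmeas : Measurable F := f.aemeasurable.measurable_mk
    have hFeq : (f : Ω → ℝ) =ᵐ[μ] F := f.aemeasurable.ae_eq_mk
    set E : Set Ω := {ω | Y ω < F ω} with hE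
    have hEmeas : MeasurableSet E := measurableSet_lt hYmeas hFmeas
    have hνE : ν E = 0 := by
      have hae : ∀ᵐ ω ∂ν, ¬ (Y ω < F ω) := by
        filter_upwards [hkey f hf, hνμ.ae_le hFeq] with ω h1 h2
        rw [← h2]; exact not_lt.2 h1
      have := ae_iff.1 hae
      simpa [hE] using this
    have hμE : μ E = 0 := by
      refine h_to_mu E hEmeas hνE ?_
      filter_upwards [hFeq, hgood, hsupp, AEEqFun.coeFn_le.2 (hBh f hf),
        AEEqFun.coeFn_le.2 (hB0 f hf), AEEqFun.coeFn_zero (μ := μ) (β := ℝ)]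
        with ω h1 h2 h3 h4 h5 h6
      intro hmem
      have hY0 : 0 ≤ Y ω := h2.2.2.2.2.2.1
      have hfY : Y ω < f ω := by rw [h1]; exact hmem
      have hfpos : 0 < f ω := lt_of_le_of_lt hY0 hfY
      have hhpos : 0 < h ω := lt_of_lt_of_le hfpos h4
      exact h3 (ne_of_gt hhpos)
    have hae2 : ∀ᵐ ω ∂μ, ω ∉ E := by
      rw [MeasureTheory.ae_iff]
      simpa [hE] using hμE
    refine AEEqFun.coeFn_le.1 ?_
    filter_upwards [hae2, hFeq, hYcoe] with ω h1 h2 h3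
    rw [h2, h3]
    exact not_lt.1 h1
  -- minimality
  have hmin : ∀ z : Ω →ₘ[μ] ℝ, (∀ f ∈ B, f ≤ z) → y ≤ z := by
    intro z hz
    have hz' : ∀ᵐ ω ∂μ, ∀ n, g n ω ≤ z ω :=
      MeasureTheory.ae_all_iff.2 fun n => AEEqFun.coeFn_le.2 (hz _ (hgB n))
    refine AEEqFun.coeFn_le.1 ?_
    filter_upwards [hz', hgood, hYcoe] with ω h1 h2 h3
    rw [h3]
    refine ciSup_le fun n => ?_
    rw [h2.1 n]
    exact h1 n
  have hy0 : 0 ≤ y := by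
    refine AEEqFun.coeFn_le.1 ?_
    filter_upwards [hgood, hYcoe, AEEqFun.coeFn_zero (μ := μ) (β := ℝ)] with ω h1 h2 h3
    rw [h2, h3]
    exact h1.2.2.2.2.2.1
  have hyh : y ≤ h := by
    refine AEEqFun.coeFn_le.1 ?_
    filter_upwards [hgood, hYcoe] with ω h1 h2
    rw [h2]
    exact h1.2.2.2.2.2.2
  exact ⟨y, hub, hmin, hy0, hyh⟩

end AuxLUBP

/-- If the support of every element of `X` is `σ`-finite (a countable
union of sets of finite measure), then `X` is a complete lattice. -/
theorem hasLUBP_of_sigmaFinite_supports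
    (X : BanachFunctionLattice Ω μ)
    (hσ : ∀ f ∈ X.carrier, ∃ s : ℕ → Set Ω,
      (∀ n, μ (s n) < ⊤) ∧ {ω | f ω ≠ 0} ⊆ ⋃ n, s n) :
    HasLUBP X.carrier := by
  classical
  intro A hAX ⟨a₀, ha₀A⟩ ⟨b, hbX, hbub⟩
  have ha₀X : a₀ ∈ X.carrier := hAX ha₀A
  have ha₀b : a₀ ≤ b := hbub a₀ ha₀A
  set h : Ω →ₘ[μ] ℝ := b - a₀ with hh_def
  have hhX : h ∈ X.carrier := aux_sub_mem X hbX ha₀X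
  obtain ⟨s, hsf, hssupp⟩ := hσ h hhX
  set t : ℕ → Set Ω := fun n => MeasureTheory.toMeasurable μ (s n) with ht
  have htm : ∀ n, MeasurableSet (t n) := fun n => MeasureTheory.measurableSet_toMeasurable μ _
  have htf : ∀ n, μ (t n) < ⊤ := fun n => by
    rw [ht]; rw [MeasureTheory.measure_toMeasurable]; exact hsf n
  have hsupp : ∀ᵐ ω ∂μ, h ω ≠ 0 → ω ∈ ⋃ n, t n := by
    filter_upwards with ω hω
    obtain ⟨i, hi⟩ := Set.mem_iUnion.1 (hssupp hω)
    exact Set.mem_iUnion.2 ⟨i, MeasureTheory.subset_toMeasurable μ _ hi⟩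
  -- the sup-closed shifted family
  set B : Set (Ω →ₘ[μ] ℝ) := (fun x => x ⊔ a₀ - a₀) '' supClosure A with hB
  -- elements of supClosure A are in the carrier and ≤ b
  have hSC : supClosure A ⊆ {x | x ∈ X.carrier ∧ x ≤ b} := by
    refine supClosure_min ?_ ?_
    · intro a ha
      exact ⟨hAX ha, hbub a ha⟩
    · intro p hp q hq
      exact ⟨aux_sup_mem X hp.1 hq.1, sup_le hp.2 hq.2⟩
  have hBne : B.Nonempty :=
    ⟨_, Set.mem_image_of_mem _ (subset_supClosure (a := a₀) ha₀A)⟩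
  have hBsup : SupClosed B := by
    rintro p ⟨x, hx, rfl⟩ q ⟨x', hx', rfl⟩
    refine ⟨x ⊔ x', supClosed_supClosure hx hx', ?_⟩
    show (x ⊔ x') ⊔ a₀ - a₀ = (x ⊔ a₀ - a₀) ⊔ (x' ⊔ a₀ - a₀)
    rw [aux_sup_sub, sup_sup_sup_comm, sup_idem]
  have hB0 : ∀ f ∈ B, 0 ≤ f := by
    rintro f ⟨x, hx, rfl⟩
    have : a₀ - a₀ ≤ x ⊔ a₀ - a₀ := aux_sub_le_sub le_sup_right
    rwa [sub_self] at this
  have hBh : ∀ f ∈ B, f ≤ h := by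
    rintro f ⟨x, hx, rfl⟩
    exact aux_sub_le_sub (sup_le (hSC hx).2 ha₀b)
  obtain ⟨y, hyub, hymin, hy0, hyh⟩ := aux_core t htm htf hsupp B hBne hBsup hB0 hBh
  refine ⟨y + a₀, ?_, ?_, ?_⟩
  · -- y + a₀ ∈ carrier
    have hyX : y ∈ X.carrier := by
      refine aux_sandwich_mem X hhX ?_
      filter_upwards [AEEqFun.coeFn_le.2 hy0, AEEqFun.coeFn_le.2 hyh,
        AEEqFun.coeFn_le.2 (le_trans hy0 hyh), AEEqFun.coeFn_zero (μ := μ) (β := ℝ)]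
        with ω h1 h2 h3 h4
      rw [h4] at h1 h3
      rw [abs_of_nonneg h1, abs_of_nonneg h3]
      exact h2
    exact X.add_mem hyX ha₀X
  · -- upper bound
    intro a ha
    have h1 : a ⊔ a₀ - a₀ ∈ B := ⟨a, subset_supClosure ha, rfl⟩
    have h2 : a ⊔ a₀ - a₀ ≤ y := hyub _ h1
    have h3 : a ⊔ a₀ - a₀ + a₀ ≤ y + a₀ := aux_add_le_add h2
    rw [sub_add_cancel] at h3
    exact le_trans le_sup_left h3
  · -- minimality
    intro z hzX hzub
    have ha₀z : a₀ ≤ z := hzub a₀ ha₀A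
    have hzSC : supClosure A ⊆ {x | x ≤ z} := by
      refine supClosure_min (t := {x | x ≤ z}) ?_ ?_
      · intro a ha
        exact hzub a ha
      · intro p hp q hq
        show p ⊔ q ≤ z
        exact sup_le hp hq
    have hzB : ∀ f ∈ B, f ≤ z - a₀ := by
      rintro f ⟨x, hx, rfl⟩
      exact aux_sub_le_sub (sup_le (hzSC hx) ha₀z)
    have := hymin _ hzB
    have h4 : y + a₀ ≤ z - a₀ + a₀ := aux_add_le_add this
    rwa [sub_add_cancel] at h4
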